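/- (Pivotal bound of the Energy Lemma) Let 0 ≤ α < n, 0 < δ ≤ 1, and let K(x,y) be an α-standard fractional kernel of order 1+δ with constant C_CZ. Let ω be a positive locally finite Borel measure on ℝⁿ, let J be a cube with 0 < ω(J) < ∞, set m_J := ω(J)^{−1}∫_J x dω(x), and let ν be a positive locally finite Borel measure with supp ν ∩ 2J = ∅ and P^α(J,ν) < ∞. Then for every Ψ ∈ L²(ω) supported in J with ∫ Ψ dω = 0: |∫ ( ∫_J (K(x,y) − K(m_J,y)) Ψ(x) dω(x) ) dν(y)| ≤ C·C_CZ·‖Ψ‖_{L²(ω)} · P^α(J,ν) · √(ω(J)), with C depending only on n, α and δ. -/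

import Mathlib

open MeasureTheory
open scoped ENNReal NNReal

noncomputable section

/-- An axis-parallel half-open cube in `ℝⁿ`, given by its corner `a` and side length `l`. -/
structure QCube (n : ℕ) where
  a : Fin n → ℝ
  l : ℝ

/-- The half-open cube as a subset of `ℝⁿ`. -/
def QCube.pts {n : ℕ} (Q : QCube n) : Set (EuclideanSpace ℝ (Fin n)) :=
  {x | ∀ i, Q.a i ≤ x i ∧ x i < Q.a i + Q.l}

/-- The center of a cube. -/
def QCube.center {n : ℕ} (Q : QCube n) : EuclideanSpace ℝ (Fin n) :=
  (EuclideanSpace.equiv (Fin n) ℝ).symm fun i => Q.a i + Q.l / 2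

/-- The concentric dilate `γQ` of a cube `Q`. -/
def QCube.dilate {n : ℕ} (Q : QCube n) (γ : ℝ) : QCube n :=
  ⟨fun i => Q.a i + Q.l / 2 - γ * Q.l / 2, γ * Q.l⟩

/-- The `m`-weighted `α`-fractional Poisson integral
`P^α_m(Q,μ) = ∫ ℓ(Q)^m / (ℓ(Q)+|y−c_Q|)^{n+m−α} dμ(y)`; `P^α = P^α_1`. -/
def poissonM {n : ℕ} (α m : ℝ) (Q : QCube n)
    (μ : Measure (EuclideanSpace ℝ (Fin n))) : ℝ≥0∞ :=
  ∫⁻ y, ENNReal.ofReal (Q.l ^ m / (Q.l + dist y Q.center) ^ ((n : ℝ) + m - α)) ∂μ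

/-- `K` is an `α`-standard fractional kernel of order `1+δ` with constant `CCZ`. -/
def IsStandardKernel (n : ℕ) (α δ CCZ : ℝ)
    (K : EuclideanSpace ℝ (Fin n) → EuclideanSpace ℝ (Fin n) → ℝ) : Prop :=
  (∀ y, ContDiffOn ℝ 1 (fun x => K x y) {y}ᶜ) ∧
  (∀ x, ContDiffOn ℝ 1 (fun y => K x y) {x}ᶜ) ∧
  (∀ x y, x ≠ y → |K x y| ≤ CCZ * ‖x - y‖ ^ (α - (n : ℝ))) ∧
  (∀ x y, x ≠ y →
    ‖fderiv ℝ (fun z => K z y) x‖ + ‖fderiv ℝ (fun z => K x z) y‖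
      ≤ CCZ * ‖x - y‖ ^ (α - (n : ℝ) - 1)) ∧
  (∀ x x' y, x ≠ y → ‖x - x'‖ ≤ 1 / 2 * ‖x - y‖ →
    ‖fderiv ℝ (fun z => K z y) x - fderiv ℝ (fun z => K z y) x'‖
      ≤ CCZ * (‖x - x'‖ / ‖x - y‖) ^ δ * ‖x - y‖ ^ (α - (n : ℝ) - 1)) ∧
  (∀ x y y', x ≠ y → ‖y - y'‖ ≤ 1 / 2 * ‖x - y‖ →
    ‖fderiv ℝ (fun z => K x z) y - fderiv ℝ (fun z => K x z) y'‖
      ≤ CCZ * (‖y - y'‖ / ‖x - y‖) ^ δ * ‖x - y‖ ^ (α - (n : ℝ) - 1))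

/-- The `ω`-mean `m_J = ω(J)^{−1} ∫_J x dω(x)` of the identity over a cube `J`. -/
def wMean {n : ℕ} (ω : Measure (EuclideanSpace ℝ (Fin n))) (J : QCube n) :
    EuclideanSpace ℝ (Fin n) :=
  (ω J.pts).toReal⁻¹ • ∫ x in J.pts, x ∂ω

lemma coord_abs_le_norm {n : ℕ} (x : EuclideanSpace ℝ (Fin n)) (i : Fin n) : |x i| ≤ ‖x‖ := by
  rw [EuclideanSpace.norm_eq]
  have h1 : ‖x i‖ ^ 2 ≤ ∑ j, ‖x j‖ ^ 2 :=
    Finset.single_le_sum (f := fun j => ‖x j‖ ^ 2) (fun j _ => by positivity) (Finset.mem_univ i)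
  calc |x i| = Real.sqrt (‖x i‖ ^ 2) := by
        rw [Real.sqrt_sq_eq_abs]; simp [Real.norm_eq_abs, abs_abs]
    _ ≤ _ := Real.sqrt_le_sqrt h1

lemma norm_le_sqrt_mul {n : ℕ} (x : EuclideanSpace ℝ (Fin n)) (r : ℝ) (hr : 0 ≤ r)
    (h : ∀ i, |x i| ≤ r) : ‖x‖ ≤ Real.sqrt n * r := by
  rw [EuclideanSpace.norm_eq]
  have h1 : ∑ j, ‖x j‖ ^ 2 ≤ (n : ℝ) * r ^ 2 := by
    calc ∑ j, ‖x j‖ ^ 2 ≤ ∑ _j : Fin n, r ^ 2 := by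
          apply Finset.sum_le_sum
          intro j _
          have hj : ‖x j‖ ≤ r := by rw [Real.norm_eq_abs]; exact h j
          nlinarith [norm_nonneg (x j)]
      _ = (n : ℝ) * r ^ 2 := by simp [mul_comm]
  calc Real.sqrt (∑ j, ‖x j‖ ^ 2) ≤ Real.sqrt ((n : ℝ) * r ^ 2) := Real.sqrt_le_sqrt h1
    _ = Real.sqrt n * r := by
        rw [Real.sqrt_mul (Nat.cast_nonneg n), Real.sqrt_sq hr]

section Main
variable {n : ℕ}

-- geometry: membership of pts in the "closed cube" S
lemma mem_S_of_pts {J : QCube n} {x : EuclideanSpace ℝ (Fin n)} (hx : x ∈ J.pts) (i : Fin n) :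
    |x i - J.center i| ≤ J.l / 2 := by
  have h := hx i
  have hc : J.center i = J.a i + J.l / 2 := rfl
  rw [hc, abs_le]; constructor <;> [linarith [h.1]; linarith [h.2]]

lemma not_mem_dilate {J : QCube n} (hl : 0 < J.l) {y : EuclideanSpace ℝ (Fin n)}
    (hy : y ∉ (J.dilate 2).pts) : ∃ i, J.l ≤ |y i - J.center i| := by
  simp only [QCube.dilate, QCube.pts, Set.mem_setOf_eq, not_forall, not_and, not_lt] at hy
  obtain ⟨i, hi⟩ := hy
  refine ⟨i, ?_⟩
  have hc : J.center i = J.a i + J.l / 2 := rfl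
  rcases le_or_gt (J.a i + J.l / 2 - 2 * J.l / 2) (y i) with h | h
  · have h2 := hi h
    rw [hc, le_abs]; left; linarith
  · rw [hc, le_abs]; right; linarith
end Main

set_option maxHeartbeats 2000000 in
/-- **Pivotal bound of the Energy Lemma.** For an `α`-standard fractional
kernel `K` of order `1+δ`, a cube `J` with `0 < ω(J) < ∞` and `m_J = ω(J)^{−1}∫_J x dω`,
and a positive measure `ν` with `supp ν ∩ 2J = ∅` and `P^α(J,ν) < ∞`, every mean-zero
`Ψ ∈ L²(ω)` supported in `J` satisfies
`|∫ (∫_J (K(x,y) − K(m_J,y)) Ψ(x) dω(x)) dν(y)| ≤ C·C_CZ·‖Ψ‖_{L²(ω)}·P^α(J,ν)·√(ω(J))`,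
with `C = C(n,α,δ)`. -/
theorem statement8 (n : ℕ) (α δ : ℝ) (hn : 1 ≤ n) (hα0 : 0 ≤ α) (hαn : α < n)
    (hδ0 : 0 < δ) (hδ1 : δ ≤ 1) :
    ∃ C : ℝ, 0 < C ∧
      ∀ CCZ : ℝ, 0 < CCZ →
      ∀ K : EuclideanSpace ℝ (Fin n) → EuclideanSpace ℝ (Fin n) → ℝ,
        IsStandardKernel n α δ CCZ K →
      ∀ ω ν : Measure (EuclideanSpace ℝ (Fin n)),
        IsLocallyFiniteMeasure ω → IsLocallyFiniteMeasure ν →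
      ∀ J : QCube n, 0 < J.l → ω J.pts ≠ 0 → ω J.pts ≠ ⊤ →
        -- `supp ν ∩ 2J = ∅` : every point of `2J` has a `ν`-null neighborhood
        (∀ x ∈ (J.dilate 2).pts, ∃ U ∈ nhds x, ν U = 0) →
        poissonM α 1 J ν ≠ ⊤ →
      ∀ Ψ : EuclideanSpace ℝ (Fin n) → ℝ,
        MemLp Ψ 2 ω → Function.support Ψ ⊆ J.pts → (∫ x, Ψ x ∂ω) = 0 →
        |∫ y, (∫ x in J.pts, (K x y - K (wMean ω J) y) * Ψ x ∂ω) ∂ν|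
          ≤ C * CCZ * (eLpNorm Ψ 2 ω).toReal * (poissonM α 1 J ν).toReal
              * Real.sqrt (ω J.pts).toReal := by
  have hsn0 : (0:ℝ) < Real.sqrt n := Real.sqrt_pos.mpr (by exact_mod_cast Nat.pos_of_ne_zero (by omega))
  have h3 : (0:ℝ) < 3 + Real.sqrt n := by linarith
  refine ⟨Real.sqrt n * (3 + Real.sqrt n) ^ ((n:ℝ) + 1 - α), by positivity, ?_⟩
  set C := Real.sqrt n * (3 + Real.sqrt n) ^ ((n:ℝ) + 1 - α) with hCdef
  have hC : 0 < C := by rw [hCdef]; positivity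
  intro CCZ hCCZ K hK ω ν hlocω hlocν J hl hJ0 hJtop hsupp hPfin Ψ hΨ hsuppΨ hmean
  set c : EuclideanSpace ℝ (Fin n) := J.center with hcdef
  set S : Set (EuclideanSpace ℝ (Fin n)) := {x : EuclideanSpace ℝ (Fin n) | ∀ i, |x i - c i| ≤ J.l / 2} with hSdef
  -- basic facts about S
  have hJS : J.pts ⊆ S := fun x hx i => mem_S_of_pts hx i
  have hSnorm : ∀ x ∈ S, ‖x - c‖ ≤ Real.sqrt n * (J.l / 2) := by
    intro x hx
    exact norm_le_sqrt_mul (x - c) (J.l / 2) (by positivity) (fun i => hx i)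
  have hSconv : Convex ℝ S := by
    intro x hx y hy a b ha hb hab
    intro i
    have h1 := hx i
    have h2 := hy i
    have he : (a • x + b • y) i - c i = a * (x i - c i) + b * (y i - c i) := by
      show a * x i + b * y i - c i = _
      linear_combination (c i) * hab
    rw [he]
    calc |a * (x i - c i) + b * (y i - c i)|
        ≤ |a * (x i - c i)| + |b * (y i - c i)| := abs_add_le _ _
      _ = a * |x i - c i| + b * |y i - c i| := by
          rw [abs_mul, abs_mul, abs_of_nonneg ha, abs_of_nonneg hb]
      _ ≤ a * (J.l / 2) + b * (J.l / 2) := by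
          gcongr
      _ = J.l / 2 := by rw [← add_mul, hab, one_mul]
  have hSclosed : IsClosed S := by
    have : S = ⋂ i, (fun x : EuclideanSpace ℝ (Fin n) => x i) ⁻¹' {t : ℝ | |t - c i| ≤ J.l / 2} := by
      ext x; simp [hSdef, Set.mem_iInter]
    rw [this]
    refine isClosed_iInter fun i => IsClosed.preimage ?_ ?_
    · exact (EuclideanSpace.proj (𝕜 := ℝ) i).continuous
    · have : {t : ℝ | |t - c i| ≤ J.l / 2} = (fun t : ℝ => |t - c i|) ⁻¹' Set.Iic (J.l / 2) := rfl
      rw [this]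
      exact IsClosed.preimage (by continuity) isClosed_Iic
  -- measurability of J.pts
  have hmeasJ : MeasurableSet J.pts := by
    have : J.pts = ⋂ i, (fun x : EuclideanSpace ℝ (Fin n) => x i) ⁻¹' Set.Ico (J.a i) (J.a i + J.l) := by
      ext x; simp [QCube.pts, Set.mem_iInter, Set.mem_Ico]
    rw [this]
    exact MeasurableSet.iInter fun i => ((measurable_pi_apply i).comp (WithLp.measurable_ofLp 2 _)) measurableSet_Ico
  -- the mean lies in S
  have hmS : wMean ω J ∈ S := by
    haveI hfin : IsFiniteMeasure (ω.restrict J.pts) :=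
      ⟨by rw [Measure.restrict_apply_univ]; exact lt_top_iff_ne_top.mpr hJtop⟩
    haveI : NeZero (ω.restrict J.pts) :=
      ⟨fun h => hJ0 (by rw [← Measure.restrict_apply_univ]; simp [h])⟩
    have hbd : ∀ᵐ x ∂ω.restrict J.pts, ‖(fun x : EuclideanSpace ℝ (Fin n) => x) x‖ ≤ ‖c‖ + Real.sqrt n * (J.l / 2) := by
      refine (ae_restrict_mem hmeasJ).mono fun x hx => ?_
      have h1 := hSnorm x (hJS hx)
      calc ‖x‖ = ‖(x - c) + c‖ := by rw [sub_add_cancel]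
        _ ≤ ‖x - c‖ + ‖c‖ := norm_add_le _ _
        _ ≤ ‖c‖ + Real.sqrt n * (J.l / 2) := by linarith
    have hint : Integrable (fun x : EuclideanSpace ℝ (Fin n) => x) (ω.restrict J.pts) :=
      Integrable.mono' (integrable_const _) aestronglyMeasurable_id hbd
    have hae : ∀ᵐ x ∂ω.restrict J.pts, (fun x : EuclideanSpace ℝ (Fin n) => x) x ∈ S :=
      (ae_restrict_mem hmeasJ).mono fun x hx => hJS hx
    have havg := Convex.average_mem hSconv hSclosed hae hint
    have : wMean ω J = ⨍ x, (fun x : EuclideanSpace ℝ (Fin n) => x) x ∂(ω.restrict J.pts) := by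
      rw [average_eq, measureReal_def, Measure.restrict_apply_univ]
      rfl
    rwa [this]
  -- key geometry
  have hgeo : ∀ y ∉ (J.dilate 2).pts, ∀ z ∈ S,
      z ≠ y ∧ J.l / 2 ≤ ‖z - y‖ ∧ J.l + dist y c ≤ (3 + Real.sqrt n) * ‖z - y‖ := by
    intro y hy z hz
    obtain ⟨i, hi⟩ := not_mem_dilate hl hy
    have h1 : |y i - c i| - |z i - c i| ≤ |y i - z i| := by
      have h := abs_sub_abs_le_abs_sub (y i - c i) (z i - c i)
      have he : y i - c i - (z i - c i) = y i - z i := by ring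
      rwa [he] at h
    have h2 : |y i - z i| ≤ ‖z - y‖ := by
      have := coord_abs_le_norm (y - z) i
      have he : (y - z) i = y i - z i := rfl
      rw [he] at this
      rwa [norm_sub_rev] at this
    have hzi := hz i
    have hl2 : J.l / 2 ≤ ‖z - y‖ := by linarith
    have hne : z ≠ y := by
      intro h
      rw [h, sub_self, norm_zero] at hl2
      linarith
    refine ⟨hne, hl2, ?_⟩
    have hd : dist y c ≤ ‖z - y‖ + Real.sqrt n * (J.l / 2) := by
      calc dist y c ≤ dist y z + dist z c := dist_triangle _ _ _
        _ = ‖z - y‖ + ‖z - c‖ := by rw [dist_eq_norm, dist_eq_norm, norm_sub_rev y z]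
        _ ≤ ‖z - y‖ + Real.sqrt n * (J.l / 2) := by linarith [hSnorm z hz]
    have h4 : Real.sqrt n * (J.l / 2) ≤ Real.sqrt n * ‖z - y‖ :=
      mul_le_mul_of_nonneg_left hl2 hsn0.le
    nlinarith
  -- Poisson kernel
  set pk : EuclideanSpace ℝ (Fin n) → ℝ := fun y => J.l ^ (1:ℝ) / (J.l + dist y c) ^ ((n:ℝ) + 1 - α) with hpkdef
  have hpk0 : ∀ y, 0 ≤ pk y := by
    intro y
    simp only [hpkdef]
    apply div_nonneg (Real.rpow_nonneg hl.le _) (Real.rpow_nonneg (by positivity) _)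
  -- inverse rpow helper
  have hinv : ∀ b : ℝ, 0 < b → b ^ (α - (n:ℝ) - 1) = (b ^ ((n:ℝ) + 1 - α))⁻¹ := by
    intro b hb
    rw [← Real.rpow_neg hb.le]
    congr 1; ring
  -- MVT kernel bound
  have hKbd : ∀ y ∉ (J.dilate 2).pts, ∀ x ∈ S, ∀ m ∈ S,
      |K x y - K m y| ≤ CCZ * C * pk y := by
    intro y hy x hx m hm
    have hd0 : (0:ℝ) ≤ dist y c := dist_nonneg
    have hld : (0:ℝ) < J.l + dist y c := by linarith
    set C0 : ℝ := CCZ * ((3 + Real.sqrt n) ^ ((n:ℝ) + 1 - α)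
      * (J.l + dist y c) ^ (α - (n:ℝ) - 1)) with hC0def
    have hC00 : 0 ≤ C0 := by
      rw [hC0def]
      have := Real.rpow_nonneg h3.le ((n:ℝ) + 1 - α)
      have := Real.rpow_nonneg hld.le (α - (n:ℝ) - 1)
      positivity
    have hbound : ∀ z ∈ S, ‖fderiv ℝ (fun w => K w y) z‖ ≤ C0 := by
      intro z hz
      obtain ⟨hzy, hl2, hge⟩ := hgeo y hy z hz
      have h1 : ‖fderiv ℝ (fun w => K w y) z‖ ≤ CCZ * ‖z - y‖ ^ (α - (n:ℝ) - 1) :=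
        le_trans (le_add_of_nonneg_right (norm_nonneg _)) (hK.2.2.2.1 z y hzy)
      have hzy0 : (0:ℝ) < ‖z - y‖ := by linarith
      have h2 : ‖z - y‖ ^ (α - (n:ℝ) - 1)
          ≤ ((J.l + dist y c) / (3 + Real.sqrt n)) ^ (α - (n:ℝ) - 1) := by
        apply Real.rpow_le_rpow_of_nonpos (by positivity) ?_ (by linarith)
        rw [div_le_iff₀ h3]
        linarith
      have h4 : ((J.l + dist y c) / (3 + Real.sqrt n)) ^ (α - (n:ℝ) - 1)
          = (3 + Real.sqrt n) ^ ((n:ℝ) + 1 - α) * (J.l + dist y c) ^ (α - (n:ℝ) - 1) := by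
        rw [Real.div_rpow hld.le h3.le, hinv (3 + Real.sqrt n) h3, div_eq_mul_inv, inv_inv, mul_comm]
      refine h1.trans ?_
      rw [hC0def]
      exact mul_le_mul_of_nonneg_left (h2.trans_eq h4) hCCZ.le
    have hderiv : ∀ z ∈ S,
        HasFDerivWithinAt (fun w => K w y) (fderiv ℝ (fun w => K w y) z) S z := by
      intro z hz
      have hzy := (hgeo y hy z hz).1
      have hdo : DifferentiableOn ℝ (fun w => K w y) ({y}ᶜ) :=
        (hK.1 y).differentiableOn one_ne_zero
      have hda : DifferentiableAt ℝ (fun w => K w y) z :=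
        hdo.differentiableAt (isOpen_compl_singleton.mem_nhds (Set.mem_compl_singleton_iff.mpr hzy))
      exact hda.hasFDerivAt.hasFDerivWithinAt
    have key : ‖K x y - K m y‖ ≤ C0 * ‖x - m‖ :=
      Convex.norm_image_sub_le_of_norm_hasFDerivWithin_le hderiv hbound hSconv hm hx
    have hxm : ‖x - m‖ ≤ Real.sqrt n * J.l := by
      have h1 := hSnorm x hx
      have h2 := hSnorm m hm
      calc ‖x - m‖ = ‖(x - c) - (m - c)‖ := by rw [sub_sub_sub_cancel_right]
        _ ≤ ‖x - c‖ + ‖m - c‖ := norm_sub_le _ _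
        _ ≤ Real.sqrt n * J.l := by linarith
    have heq : C0 * (Real.sqrt n * J.l) = CCZ * C * pk y := by
      simp only [hC0def, hCdef, hpkdef]
      rw [hinv _ hld, Real.rpow_one, div_eq_mul_inv]
      ring
    calc |K x y - K m y| = ‖K x y - K m y‖ := (Real.norm_eq_abs _).symm
      _ ≤ C0 * ‖x - m‖ := key
      _ ≤ C0 * (Real.sqrt n * J.l) := mul_le_mul_of_nonneg_left hxm hC00
      _ = CCZ * C * pk y := heq
  -- ν vanishes on 2J
  have hν2 : ν (J.dilate 2).pts = 0 := by
    apply measure_null_of_locally_null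
    intro x hx
    obtain ⟨U, hU, hU0⟩ := hsupp x hx
    exact ⟨U, nhdsWithin_le_nhds hU, hU0⟩
  have haeν : ∀ᵐ y ∂ν, y ∉ (J.dilate 2).pts := by
    rw [ae_iff]
    have he : {y : EuclideanSpace ℝ (Fin n) | ¬ y ∉ (J.dilate 2).pts} = (J.dilate 2).pts := by
      ext y; simp
    rw [he]; exact hν2
  set N := eLpNorm Ψ 2 ω with hNdef
  have hNtop : N ≠ ⊤ := hΨ.2.ne
  set W := (ω J.pts) ^ ((1:ℝ)/2) with hWdef
  have hWtop : W ≠ ⊤ := (ENNReal.rpow_lt_top_of_nonneg (by norm_num) hJtop).ne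
  -- Cauchy–Schwarz
  have hma : AEMeasurable (fun x => ENNReal.ofReal ‖Ψ x‖) (ω.restrict J.pts) :=
    ENNReal.measurable_ofReal.comp_aemeasurable (hΨ.1.restrict.norm.aemeasurable)
  have hCS : ∫⁻ x in J.pts, ENNReal.ofReal ‖Ψ x‖ ∂ω ≤ N * W := by
    have hconj : Real.HolderConjugate 2 2 := Real.HolderConjugate.two_two
    have h := ENNReal.lintegral_mul_le_Lp_mul_Lq (ω.restrict J.pts) hconj hma
      (aemeasurable_const (b := (1:ℝ≥0∞)))
    simp only [Pi.mul_apply, mul_one, ENNReal.one_rpow, lintegral_one,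
      Measure.restrict_apply_univ] at h
    refine le_trans h ?_
    have hle : ∫⁻ x in J.pts, (ENNReal.ofReal ‖Ψ x‖) ^ (2:ℝ) ∂ω
        ≤ ∫⁻ x, (ENNReal.ofReal ‖Ψ x‖) ^ (2:ℝ) ∂ω := setLIntegral_le_lintegral _ _
    have hN2 : N = (∫⁻ x, (ENNReal.ofReal ‖Ψ x‖) ^ (2:ℝ) ∂ω) ^ ((1:ℝ)/2) := by
      rw [hNdef, eLpNorm_eq_lintegral_rpow_enorm_toReal (by norm_num) (by norm_num)]
      norm_num [← ofReal_norm]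
    rw [hN2, hWdef]
    exact mul_le_mul_left (ENNReal.rpow_le_rpow hle (by norm_num)) _
  -- inner integral bound
  have hInner : ∀ y ∉ (J.dilate 2).pts,
      ENNReal.ofReal ‖∫ x in J.pts, (K x y - K (wMean ω J) y) * Ψ x ∂ω‖
        ≤ ENNReal.ofReal (CCZ * C) * (N * W) * ENNReal.ofReal (pk y) := by
    intro y hy
    have hB0 : 0 ≤ CCZ * C * pk y := mul_nonneg (mul_nonneg hCCZ.le hC.le) (hpk0 y)
    have step1 := norm_integral_le_lintegral_norm (μ := ω.restrict J.pts)
      (fun x => (K x y - K (wMean ω J) y) * Ψ x)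
    have step2 : ∫⁻ x in J.pts, ENNReal.ofReal ‖(K x y - K (wMean ω J) y) * Ψ x‖ ∂ω
        ≤ ENNReal.ofReal (CCZ * C * pk y) * (N * W) := by
      calc ∫⁻ x in J.pts, ENNReal.ofReal ‖(K x y - K (wMean ω J) y) * Ψ x‖ ∂ω
          ≤ ∫⁻ x in J.pts, ENNReal.ofReal (CCZ * C * pk y) * ENNReal.ofReal ‖Ψ x‖ ∂ω := by
            apply setLIntegral_mono_ae (hma.const_mul _)
            apply ae_of_all
            intro x hx
            rw [← ENNReal.ofReal_mul hB0]
            apply ENNReal.ofReal_le_ofReal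
            rw [norm_mul, Real.norm_eq_abs (K x y - K (wMean ω J) y)]
            exact mul_le_mul_of_nonneg_right
              (hKbd y hy x (hJS hx) (wMean ω J) hmS) (norm_nonneg _)
        _ = ENNReal.ofReal (CCZ * C * pk y) * ∫⁻ x in J.pts, ENNReal.ofReal ‖Ψ x‖ ∂ω :=
            lintegral_const_mul' _ _ ENNReal.ofReal_ne_top
        _ ≤ _ := mul_le_mul_right hCS _
    have htop : (∫⁻ x in J.pts, ENNReal.ofReal ‖(K x y - K (wMean ω J) y) * Ψ x‖ ∂ω) ≠ ⊤ :=
      ne_top_of_le_ne_top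
        (ENNReal.mul_ne_top ENNReal.ofReal_ne_top (ENNReal.mul_ne_top hNtop hWtop)) step2
    calc ENNReal.ofReal ‖∫ x in J.pts, (K x y - K (wMean ω J) y) * Ψ x ∂ω‖
        ≤ ENNReal.ofReal
            ((∫⁻ x in J.pts, ENNReal.ofReal ‖(K x y - K (wMean ω J) y) * Ψ x‖ ∂ω).toReal) :=
          ENNReal.ofReal_le_ofReal step1
      _ = ∫⁻ x in J.pts, ENNReal.ofReal ‖(K x y - K (wMean ω J) y) * Ψ x‖ ∂ω :=
          ENNReal.ofReal_toReal htop
      _ ≤ ENNReal.ofReal (CCZ * C * pk y) * (N * W) := step2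
      _ = ENNReal.ofReal (CCZ * C) * (N * W) * ENNReal.ofReal (pk y) := by
          rw [ENNReal.ofReal_mul (mul_nonneg hCCZ.le hC.le)]
          ring
  -- outer estimate
  have hPdef : poissonM α 1 J ν = ∫⁻ y, ENNReal.ofReal (pk y) ∂ν := rfl
  have hlint : ∫⁻ y, ENNReal.ofReal ‖∫ x in J.pts, (K x y - K (wMean ω J) y) * Ψ x ∂ω‖ ∂ν
      ≤ ENNReal.ofReal (CCZ * C) * (N * W) * poissonM α 1 J ν := by
    calc ∫⁻ y, ENNReal.ofReal ‖∫ x in J.pts, (K x y - K (wMean ω J) y) * Ψ x ∂ω‖ ∂ν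
        ≤ ∫⁻ y, ENNReal.ofReal (CCZ * C) * (N * W) * ENNReal.ofReal (pk y) ∂ν :=
          lintegral_mono_ae (haeν.mono fun y hy => hInner y hy)
      _ = ENNReal.ofReal (CCZ * C) * (N * W) * ∫⁻ y, ENNReal.ofReal (pk y) ∂ν :=
          lintegral_const_mul' _ _
            (ENNReal.mul_ne_top ENNReal.ofReal_ne_top (ENNReal.mul_ne_top hNtop hWtop))
      _ = _ := by rw [hPdef]
  have hRtop : ENNReal.ofReal (CCZ * C) * (N * W) * poissonM α 1 J ν ≠ ⊤ :=
    ENNReal.mul_ne_top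
      (ENNReal.mul_ne_top ENNReal.ofReal_ne_top (ENNReal.mul_ne_top hNtop hWtop)) hPfin
  have hfinal : (ENNReal.ofReal (CCZ * C) * (N * W) * poissonM α 1 J ν).toReal
      = C * CCZ * N.toReal * (poissonM α 1 J ν).toReal * Real.sqrt (ω J.pts).toReal := by
    rw [ENNReal.toReal_mul, ENNReal.toReal_mul, ENNReal.toReal_mul,
      ENNReal.toReal_ofReal (mul_nonneg hCCZ.le hC.le)]
    have hW : W.toReal = Real.sqrt (ω J.pts).toReal := by
      rw [hWdef, ← ENNReal.toReal_rpow, Real.sqrt_eq_rpow]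
    rw [hW]; ring
  calc |∫ y, (∫ x in J.pts, (K x y - K (wMean ω J) y) * Ψ x ∂ω) ∂ν|
      = ‖∫ y, (∫ x in J.pts, (K x y - K (wMean ω J) y) * Ψ x ∂ω) ∂ν‖ :=
        (Real.norm_eq_abs _).symm
    _ ≤ (∫⁻ y, ENNReal.ofReal ‖∫ x in J.pts, (K x y - K (wMean ω J) y) * Ψ x ∂ω‖ ∂ν).toReal :=
        norm_integral_le_lintegral_norm _
    _ ≤ (ENNReal.ofReal (CCZ * C) * (N * W) * poissonM α 1 J ν).toReal :=
        ENNReal.toReal_mono hRtop hlint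
    _ = _ := by rw [hfinal]
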